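/- Let H ∈ (0, 1/2), T > 0, β ∈ (1/2 − H, 1], and let λ : [0,T] → ℝ be β-Hölder continuous with λ(0) = 0. Then the function F(t) := ∫₀^t λ(s) (t−s)^{H+1/2} ds is differentiable at every t ∈ (0,T), with derivative F′(t) = (H + 1/2) ∫₀^t λ(s) (t−s)^{H−1/2} ds. -/

import Mathlib

open MeasureTheory intervalIntegral Real

noncomputable def kk (q : ℝ) : ℝ → ℝ := fun x => if 0 < x then x ^ q else 0

lemma kk_meas (q : ℝ) : Measurable (kk q) :=
  Measurable.ite measurableSet_Ioi (by fun_prop) measurable_const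

lemma kk_nonneg (q : ℝ) (x : ℝ) : 0 ≤ kk q x := by
  unfold kk
  split
  · exact Real.rpow_nonneg (le_of_lt (by assumption)) q
  · exact le_refl 0

lemma kk_pos_eq (q : ℝ) {x : ℝ} (hx : 0 < x) : kk q x = x ^ q := if_pos hx

lemma kk_nonpos_eq (q : ℝ) {x : ℝ} (hx : x ≤ 0) : kk q x = 0 := if_neg (not_lt.2 hx)

lemma kk_intervalIntegrable {q : ℝ} (hq : -1 < q) (a b : ℝ) :
    IntervalIntegrable (kk q) volume a b := by
  have key : ∀ c : ℝ, IntervalIntegrable (kk q) volume 0 c := by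
    intro c
    rcases le_or_gt 0 c with hc | hc
    · have h1 := intervalIntegrable_rpow' hq (a := 0) (b := c)
      rw [intervalIntegrable_iff_integrableOn_Ioc_of_le hc] at h1 ⊢
      exact h1.congr_fun (fun x hx => (kk_pos_eq q hx.1).symm) measurableSet_Ioc
    · apply IntervalIntegrable.symm
      rw [intervalIntegrable_iff_integrableOn_Ioc_of_le hc.le]
      exact (integrableOn_zero (s := Set.Ioc c 0)).congr_fun
        (fun x hx => (kk_nonpos_eq q hx.2).symm) measurableSet_Ioc
  exact (key a).symm.trans (key b)

lemma kk_integral {q : ℝ} (hq : -1 < q) {c : ℝ} (hc : 0 ≤ c) :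
    ∫ x in (0:ℝ)..c, kk q x = c ^ (q + 1) / (q + 1) := by
  have h1 : ∫ x in (0:ℝ)..c, kk q x = ∫ x in (0:ℝ)..c, x ^ q := by
    rw [intervalIntegral.integral_of_le hc, intervalIntegral.integral_of_le hc]
    exact setIntegral_congr_fun measurableSet_Ioc (fun x hx => kk_pos_eq q hx.1)
  rw [h1, integral_rpow (Or.inl hq), Real.zero_rpow (by linarith), sub_zero]

lemma kk_integral' {q : ℝ} (hq : -1 < q) {a c : ℝ} (ha : a ≤ 0) (hc : 0 ≤ c) :
    ∫ x in a..c, kk q x = c ^ (q + 1) / (q + 1) := by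
  have h0 : ∫ x in a..(0:ℝ), kk q x = 0 := by
    have : Set.EqOn (kk q) (fun _ => (0:ℝ)) (Set.uIcc a 0) := by
      intro x hx
      rw [Set.uIcc_of_le ha] at hx
      exact kk_nonpos_eq q hx.2
    rw [intervalIntegral.integral_congr this, intervalIntegral.integral_const, smul_zero]
  rw [← intervalIntegral.integral_add_adjacent_intervals
    (kk_intervalIntegrable hq a 0) (kk_intervalIntegrable hq 0 c), h0, zero_add,
    kk_integral hq hc]

/-- For `H ∈ (0,1/2)`, `β ∈ (1/2-H, 1]` and `λ : [0,T] → ℝ` β-Hölder continuous with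
`λ(0) = 0`, the function `F(t) = ∫₀^t λ(s) (t-s)^(H+1/2) ds` is differentiable at every
`t ∈ (0,T)` with `F'(t) = (H+1/2) ∫₀^t λ(s) (t-s)^(H-1/2) ds`. -/
theorem hasDerivAt_GFO_kernel_integral
    (H T β : ℝ) (hH : H ∈ Set.Ioo (0:ℝ) (1/2)) (hT : 0 < T)
    (hβ : β ∈ Set.Ioc (1/2 - H) 1)
    (lam : ℝ → ℝ) (C : ℝ) (hC : 0 ≤ C)
    (hHolder : ∀ s ∈ Set.Icc (0:ℝ) T, ∀ t ∈ Set.Icc (0:ℝ) T,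
      |lam t - lam s| ≤ C * |t - s| ^ β)
    (hlam0 : lam 0 = 0) :
    ∀ t ∈ Set.Ioo (0:ℝ) T,
      HasDerivAt (fun τ => ∫ s in (0:ℝ)..τ, lam s * (τ - s) ^ (H + 1/2))
        ((H + 1/2) * ∫ s in (0:ℝ)..t, lam s * (t - s) ^ (H - 1/2)) t := by
  obtain ⟨hH0, hH2⟩ := hH
  have hβ0 : (0:ℝ) < β := lt_trans (by linarith) hβ.1
  have hq1 : (-1:ℝ) < H - 1/2 := by linarith
  have hp0 : (0:ℝ) < H + 1/2 := by linarith
  have hqp : (H - 1/2) + 1 = H + 1/2 := by ring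
  set M : ℝ := C * T ^ β with hMdef
  have hM0 : 0 ≤ M := mul_nonneg hC (Real.rpow_nonneg hT.le β)
  -- boundedness of lam
  have hM : ∀ s ∈ Set.Icc (0:ℝ) T, |lam s| ≤ M := by
    intro s hs
    have h := hHolder 0 ⟨le_refl 0, hT.le⟩ s hs
    rw [hlam0, sub_zero, sub_zero, abs_of_nonneg hs.1] at h
    exact h.trans (mul_le_mul_of_nonneg_left
      (Real.rpow_le_rpow hs.1 hs.2 hβ0.le) hC)
  -- continuity of lam on [0,T]
  have hlamC : ContinuousOn lam (Set.Icc 0 T) := by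
    intro x hx
    rw [ContinuousWithinAt, tendsto_iff_dist_tendsto_zero]
    have hlim : Filter.Tendsto (fun y : ℝ => C * |y - x| ^ β)
        (nhdsWithin x (Set.Icc 0 T)) (nhds 0) := by
      have habs : Filter.Tendsto (fun y : ℝ => |y - x|) (nhds x) (nhds 0) := by
        have hc : Continuous (fun y : ℝ => |y - x|) := by continuity
        have := hc.tendsto x
        simpa using this
      have h1 : Filter.Tendsto (fun z : ℝ => z ^ β) (nhds 0) (nhds 0) := by
        have := (Real.continuousAt_rpow_const 0 β (Or.inr hβ0.le)).tendsto
        rwa [Real.zero_rpow hβ0.ne'] at this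
      have h2 : Filter.Tendsto (fun y : ℝ => |y - x| ^ β) (nhds x) (nhds 0) := h1.comp habs
      have h3 := h2.const_mul C
      rw [mul_zero] at h3
      exact h3.mono_left nhdsWithin_le_nhds
    apply squeeze_zero' (t₀ := nhdsWithin x (Set.Icc 0 T))
      (Filter.Eventually.of_forall fun y => dist_nonneg) ?_ hlim
    filter_upwards [self_mem_nhdsWithin] with y hy
    rw [Real.dist_eq]
    exact hHolder x hx y hy
  -- the candidate derivative function
  set g : ℝ → ℝ := fun τ => (H + 1/2) * ∫ u in (0:ℝ)..τ, lam (τ - u) * u ^ (H - 1/2)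
    with hgdef
  have hne : ∀ c : ℝ, ∀ᵐ u : ℝ ∂volume, u ≠ c := by
    intro c
    rw [ae_iff]
    simpa using Real.volume_singleton (a := c)
  -- reflected form of g
  have hg_eq : ∀ τ : ℝ, g τ = (H + 1/2) * ∫ s in (0:ℝ)..τ, lam s * (τ - s) ^ (H - 1/2) := by
    intro τ
    have h := intervalIntegral.integral_comp_sub_left (a := 0) (b := τ)
      (fun s => lam s * (τ - s) ^ (H - 1/2)) τ
    simp only [sub_zero, sub_self] at h
    rw [hgdef]
    simp only
    rw [← h]
    congr 1
    apply intervalIntegral.integral_congr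
    intro x _
    simp [sub_sub_cancel]
  -- pointwise bound on g
  have hne0 : H - 1/2 + 1 ≠ 0 := by rw [hqp]; exact hp0.ne'
  have hgb : ∀ τ ∈ Set.Icc (0:ℝ) T, |g τ| ≤ M * T ^ (H + 1/2) := by
    intro τ hτ
    have hbd : ∀ᵐ u ∂volume.restrict (Set.uIoc 0 τ),
        ‖lam (τ - u) * u ^ (H - 1/2)‖ ≤ M * u ^ (H - 1/2) := by
      refine (ae_restrict_iff' measurableSet_uIoc).2 (Filter.Eventually.of_forall ?_)
      intro u hu
      rw [Set.uIoc_of_le hτ.1] at hu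
      have h1 : τ - u ∈ Set.Icc (0:ℝ) T := ⟨by linarith [hu.2], by linarith [hu.1, hτ.2]⟩
      rw [Real.norm_eq_abs, abs_mul, abs_of_nonneg (Real.rpow_nonneg hu.1.le _)]
      exact mul_le_mul_of_nonneg_right (hM _ h1) (Real.rpow_nonneg hu.1.le _)
    have hnorm := intervalIntegral.norm_integral_le_abs_of_norm_le hbd
      ((intervalIntegrable_rpow' hq1).const_mul M)
    have hcomp : ∫ u in (0:ℝ)..τ, M * u ^ (H - 1/2) = M * (τ ^ (H + 1/2) / (H + 1/2)) := by
      rw [intervalIntegral.integral_const_mul, integral_rpow (Or.inl hq1),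
        Real.zero_rpow hne0, sub_zero, hqp]
    rw [hgdef]
    simp only
    rw [abs_mul, abs_of_nonneg hp0.le]
    calc (H + 1/2) * |∫ u in (0:ℝ)..τ, lam (τ - u) * u ^ (H - 1/2)|
        ≤ (H + 1/2) * |∫ u in (0:ℝ)..τ, M * u ^ (H - 1/2)| := by
          exact mul_le_mul_of_nonneg_left (by simpa [Real.norm_eq_abs] using hnorm) hp0.le
      _ = (H + 1/2) * (M * (τ ^ (H + 1/2) / (H + 1/2))) := by
          rw [hcomp, abs_of_nonneg (mul_nonneg hM0 (div_nonneg (Real.rpow_nonneg hτ.1 _) hp0.le))]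
      _ = M * τ ^ (H + 1/2) := by field_simp
      _ ≤ M * T ^ (H + 1/2) :=
          mul_le_mul_of_nonneg_left (Real.rpow_le_rpow hτ.1 hτ.2 hp0.le) hM0
  -- continuity of g on (0,T)
  have hgCA : ∀ t₀ ∈ Set.Ioo (0:ℝ) T, ContinuousAt g t₀ := by
    intro t₀ ht₀
    set F : ℝ → ℝ → ℝ := fun τ u => (Set.Ioc (0:ℝ) τ).indicator
      (fun u => lam (τ - u) * u ^ (H - 1/2)) u with hFdef
    have hgF : ∀ τ ∈ Set.Icc (0:ℝ) T, g τ = (H + 1/2) * ∫ u in (0:ℝ)..T, F τ u := by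
      intro τ hτ
      have h1 : ∫ u in (0:ℝ)..T, F τ u = ∫ u in (0:ℝ)..τ, lam (τ - u) * u ^ (H - 1/2) := by
        rw [intervalIntegral.integral_of_le hT.le, intervalIntegral.integral_of_le hτ.1]
        rw [hFdef]
        simp only
        rw [setIntegral_indicator measurableSet_Ioc]
        congr 1
        rw [Set.Ioc_inter_Ioc]
        simp [hτ.2]
      rw [hgdef]
      simp only
      rw [h1]
    have hcont : ContinuousAt (fun τ => ∫ u in (0:ℝ)..T, F τ u) t₀ := by
      apply intervalIntegral.continuousAt_of_dominated_interval
        (bound := fun u => M * u ^ (H - 1/2))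
      · filter_upwards [isOpen_Ioo.mem_nhds ht₀] with τ hτ
        rw [hFdef]
        simp only
        rw [Set.uIoc_of_le hT.le, aestronglyMeasurable_indicator_iff measurableSet_Ioc,
          Measure.restrict_restrict measurableSet_Ioc,
          Set.inter_eq_left.2 (Set.Ioc_subset_Ioc_right hτ.2.le)]
        apply ContinuousOn.aestronglyMeasurable ?_ measurableSet_Ioc
        apply ContinuousOn.mul
        · apply hlamC.comp ((continuous_const.sub continuous_id).continuousOn)
          intro u hu
          simp only [id_eq, Set.mem_Icc, Pi.sub_apply]
          constructor
          · linarith [hu.2]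
          · linarith [hu.1, hτ.2]
        · intro u hu
          exact (Real.continuousAt_rpow_const u _ (Or.inl hu.1.ne')).continuousWithinAt
      · filter_upwards [isOpen_Ioo.mem_nhds ht₀] with τ hτ
        refine Filter.Eventually.of_forall ?_
        intro u hu
        rw [Set.uIoc_of_le hT.le] at hu
        rw [hFdef]
        simp only
        by_cases hmem : u ∈ Set.Ioc (0:ℝ) τ
        · rw [Set.indicator_of_mem hmem]
          rw [Real.norm_eq_abs, abs_mul, abs_of_nonneg (Real.rpow_nonneg hu.1.le _)]
          exact mul_le_mul_of_nonneg_right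
            (hM _ ⟨by linarith [hmem.2], by linarith [hmem.1, hτ.2]⟩)
            (Real.rpow_nonneg hu.1.le _)
        · rw [Set.indicator_of_notMem hmem]
          simpa using mul_nonneg hM0 (Real.rpow_nonneg hu.1.le _)
      · exact (intervalIntegrable_rpow' hq1).const_mul M
      · filter_upwards [hne t₀] with u hu
        intro hmem
        rw [Set.uIoc_of_le hT.le] at hmem
        rcases lt_or_gt_of_ne hu with hlt | hgt
        · have hev : (fun τ => F τ u) =ᶠ[nhds t₀]
              (fun τ => lam (τ - u) * u ^ (H - 1/2)) := by
            filter_upwards [isOpen_Ioi.mem_nhds hlt] with τ hτ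
            exact Set.indicator_of_mem
              (show u ∈ Set.Ioc (0:ℝ) τ from ⟨hmem.1, le_of_lt hτ⟩) _
          have hca : ContinuousAt (fun τ => lam (τ - u) * u ^ (H - 1/2)) t₀ := by
            have h1 : ContinuousAt lam (t₀ - u) := by
              apply hlamC.continuousAt
              apply Icc_mem_nhds
              · linarith [hmem.1]
              · linarith [ht₀.2, hmem.1]
            have h2 : ContinuousAt (fun τ : ℝ => τ - u) t₀ := by fun_prop
            have h3 : ContinuousAt (fun τ : ℝ => lam (τ - u)) t₀ :=
              Filter.Tendsto.comp h1 h2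
            exact h3.mul continuousAt_const
          exact hca.congr hev.symm
        · have hev : (fun τ => F τ u) =ᶠ[nhds t₀] (fun _ => (0:ℝ)) := by
            filter_upwards [isOpen_Iio.mem_nhds hgt] with τ hτ
            exact Set.indicator_of_notMem (fun hc => absurd hc.2 (not_le.2 hτ)) _
          exact continuousAt_const.congr hev.symm
    have hev2 : (fun τ => (H + 1/2) * ∫ u in (0:ℝ)..T, F τ u) =ᶠ[nhds t₀] g := by
      filter_upwards [isOpen_Ioo.mem_nhds ht₀] with τ hτ
      exact (hgF τ ⟨hτ.1.le, hτ.2.le⟩).symm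
    exact (continuousAt_const.mul hcont).congr hev2
  have hgCO : ContinuousOn g (Set.Ioo 0 T) :=
    fun x hx => (hgCA x hx).continuousWithinAt
  -- Fubini identity
  have hkey : ∀ r ∈ Set.Icc (0:ℝ) T,
      (∫ τ in (0:ℝ)..r, g τ) = ∫ s in (0:ℝ)..r, lam s * (r - s) ^ (H + 1/2) := by
    intro r hr
    set Φ : ℝ → ℝ → ℝ := fun τ s => (H + 1/2) * (lam s * kk (H - 1/2) (τ - s)) with hΦdef
    have hsub : Set.Ioc (0:ℝ) r ⊆ Set.Icc (0:ℝ) T :=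
      fun x hx => ⟨hx.1.le, hx.2.trans hr.2⟩
    have hlam_asm : AEStronglyMeasurable lam (volume.restrict (Set.Ioc (0:ℝ) r)) :=
      (hlamC.mono hsub).aestronglyMeasurable measurableSet_Ioc
    have hkcomp : ∀ τ : ℝ, IntervalIntegrable (fun s => kk (H - 1/2) (τ - s)) volume 0 r := by
      intro τ
      have h := (kk_intervalIntegrable hq1 (τ - r) τ).comp_sub_left τ
      have h2 : IntervalIntegrable (fun s => kk (H - 1/2) (τ - s)) volume r 0 := by
        simpa using h
      exact h2.symm
    have hΦmeas : ∀ τ : ℝ, AEStronglyMeasurable (fun s => Φ τ s)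
        (volume.restrict (Set.Ioc (0:ℝ) r)) := fun τ =>
      ((hlam_asm.mul (((kk_meas (H - 1/2)).comp
        (measurable_const.sub measurable_id)).aestronglyMeasurable)).const_mul _)
    have hΦbd : ∀ τ : ℝ, ∀ s ∈ Set.Ioc (0:ℝ) r,
        ‖Φ τ s‖ ≤ ((H + 1/2) * M) * kk (H - 1/2) (τ - s) := by
      intro τ s hs
      rw [hΦdef]
      simp only
      rw [Real.norm_eq_abs, abs_mul, abs_mul, abs_of_nonneg hp0.le,
        abs_of_nonneg (kk_nonneg _ _), mul_assoc]
      exact mul_le_mul_of_nonneg_left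
        (mul_le_mul_of_nonneg_right (hM s (hsub hs)) (kk_nonneg _ _)) hp0.le
    have hΦint : ∀ τ : ℝ, IntegrableOn (fun s => Φ τ s) (Set.Ioc (0:ℝ) r) volume := by
      intro τ
      refine Integrable.mono' (g := fun s => ((H + 1/2) * M) * kk (H - 1/2) (τ - s))
        ((intervalIntegrable_iff_integrableOn_Ioc_of_le hr.1).1
          ((hkcomp τ).const_mul ((H + 1/2) * M)))
        (hΦmeas τ) ?_
      exact (ae_restrict_iff' measurableSet_Ioc).2
        (Filter.Eventually.of_forall (hΦbd τ))
    have hkval : ∀ τ ∈ Set.Ioc (0:ℝ) r, (∫ s in (0:ℝ)..r, kk (H - 1/2) (τ - s))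
        = τ ^ (H + 1/2) / (H + 1/2) := by
      intro τ hτ
      rw [intervalIntegral.integral_comp_sub_left (kk (H - 1/2)) τ, sub_zero, ← hqp]
      exact kk_integral' hq1 (by linarith [hτ.2]) hτ.1.le
    haveI : IsFiniteMeasure (volume.restrict (Set.Ioc (0:ℝ) r)) :=
      ⟨by rw [Measure.restrict_apply_univ]; exact measure_Ioc_lt_top⟩
    have hΦprod : AEStronglyMeasurable (fun z : ℝ × ℝ => Φ z.1 z.2)
        ((volume.restrict (Set.Ioc (0:ℝ) r)).prod (volume.restrict (Set.Ioc (0:ℝ) r))) :=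
      AEStronglyMeasurable.const_mul
        ((hlam_asm.comp_snd).mul (((kk_meas (H - 1/2)).comp
          (measurable_fst.sub measurable_snd)).aestronglyMeasurable)) _
    have HΦ : Integrable (fun z : ℝ × ℝ => Φ z.1 z.2)
        ((volume.restrict (Set.Ioc (0:ℝ) r)).prod (volume.restrict (Set.Ioc (0:ℝ) r))) := by
      rw [integrable_prod_iff hΦprod]
      constructor
      · exact Filter.Eventually.of_forall fun τ => hΦint τ
      · refine Integrable.mono'
          (integrable_const (((H + 1/2) * M) * (r ^ (H + 1/2) / (H + 1/2))))
          (hΦprod.norm.integral_prod_right') ?_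
        refine (ae_restrict_iff' measurableSet_Ioc).2 (Filter.Eventually.of_forall ?_)
        intro τ hτ
        rw [Real.norm_eq_abs, abs_of_nonneg (integral_nonneg fun s => norm_nonneg _)]
        have hle : (∫ s in Set.Ioc (0:ℝ) r, ‖Φ τ s‖)
            ≤ ∫ s in Set.Ioc (0:ℝ) r, ((H + 1/2) * M) * kk (H - 1/2) (τ - s) := by
          refine integral_mono_ae (hΦint τ).norm
            ((intervalIntegrable_iff_integrableOn_Ioc_of_le hr.1).1 ((hkcomp τ).const_mul _))
            ?_
          exact (ae_restrict_iff' measurableSet_Ioc).2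
            (Filter.Eventually.of_forall (hΦbd τ))
        have h2 : (∫ s in Set.Ioc (0:ℝ) r, ((H + 1/2) * M) * kk (H - 1/2) (τ - s))
            = ((H + 1/2) * M) * (τ ^ (H + 1/2) / (H + 1/2)) := by
          rw [← intervalIntegral.integral_of_le hr.1,
            intervalIntegral.integral_const_mul, hkval τ hτ]
        refine hle.trans (h2.le.trans ?_)
        refine mul_le_mul_of_nonneg_left ?_ (mul_nonneg hp0.le hM0)
        exact (div_le_div_iff_of_pos_right hp0).2 (Real.rpow_le_rpow hτ.1.le hτ.2 hp0.le)
    have stepA : ∀ τ ∈ Set.Ioc (0:ℝ) r, g τ = ∫ s in Set.Ioc (0:ℝ) r, Φ τ s := by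
      intro τ hτ
      have h1 : g τ = ∫ s in Set.Ioc (0:ℝ) τ, Φ τ s := by
        rw [hg_eq τ, ← intervalIntegral.integral_const_mul,
          intervalIntegral.integral_of_le hτ.1.le]
        refine setIntegral_congr_ae measurableSet_Ioc ?_
        filter_upwards [hne τ] with s hs hmem
        simp only [hΦdef]
        rw [kk_pos_eq _ (sub_pos.2 (lt_of_le_of_ne hmem.2 hs))]
      have h2 : (∫ s in Set.Ioc (0:ℝ) r, Φ τ s)
          = (∫ s in Set.Ioc (0:ℝ) τ, Φ τ s) + ∫ s in Set.Ioc τ r, Φ τ s := by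
        rw [← setIntegral_union (Set.Ioc_disjoint_Ioc_of_le le_rfl) measurableSet_Ioc
          ((hΦint τ).mono_set (Set.Ioc_subset_Ioc_right hτ.2))
          ((hΦint τ).mono_set (Set.Ioc_subset_Ioc_left hτ.1.le)),
          Set.Ioc_union_Ioc_eq_Ioc hτ.1.le hτ.2]
      have h3 : (∫ s in Set.Ioc τ r, Φ τ s) = 0 := by
        have heq : Set.EqOn (fun s => Φ τ s) (fun _ => (0:ℝ)) (Set.Ioc τ r) := by
          intro s hs
          simp only [hΦdef]
          rw [kk_nonpos_eq _ (by linarith [hs.1] : τ - s ≤ 0)]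
          ring
        rw [setIntegral_congr_fun measurableSet_Ioc heq]
        simp
      rw [h1, h2, h3, add_zero]
    have stepD : ∀ s ∈ Set.Ioc (0:ℝ) r,
        (∫ τ in Set.Ioc (0:ℝ) r, Φ τ s) = lam s * (r - s) ^ (H + 1/2) := by
      intro s hs
      have h1 : (fun τ => Φ τ s) = fun τ => ((H + 1/2) * lam s) * kk (H - 1/2) (τ - s) := by
        funext τ
        simp only [hΦdef]
        ring
      rw [h1, MeasureTheory.integral_const_mul, ← intervalIntegral.integral_of_le hr.1,
        intervalIntegral.integral_comp_sub_right (kk (H - 1/2)) s, zero_sub,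
        kk_integral' hq1 (neg_nonpos.2 hs.1.le) (sub_nonneg.2 hs.2), hqp]
      field_simp
    calc ∫ τ in (0:ℝ)..r, g τ
        = ∫ τ in Set.Ioc (0:ℝ) r, g τ := intervalIntegral.integral_of_le hr.1
      _ = ∫ τ in Set.Ioc (0:ℝ) r, ∫ s in Set.Ioc (0:ℝ) r, Φ τ s :=
          setIntegral_congr_fun measurableSet_Ioc stepA
      _ = ∫ s in Set.Ioc (0:ℝ) r, ∫ τ in Set.Ioc (0:ℝ) r, Φ τ s :=
          integral_integral_swap (f := fun τ s => Φ τ s) HΦ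
      _ = ∫ s in Set.Ioc (0:ℝ) r, lam s * (r - s) ^ (H + 1/2) :=
          setIntegral_congr_fun measurableSet_Ioc stepD
      _ = ∫ s in (0:ℝ)..r, lam s * (r - s) ^ (H + 1/2) :=
          (intervalIntegral.integral_of_le hr.1).symm
  -- assembly
  intro t ht
  have hII : IntervalIntegrable g volume 0 t := by
    rw [intervalIntegrable_iff_integrableOn_Ioc_of_le ht.1.le]
    have hsub : Set.Ioc (0:ℝ) t ⊆ Set.Ioo (0:ℝ) T :=
      fun x hx => ⟨hx.1, lt_of_le_of_lt hx.2 ht.2⟩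
    refine Integrable.mono' (integrable_const (M * T ^ (H + 1/2)))
      ((hgCO.mono hsub).aestronglyMeasurable measurableSet_Ioc) ?_
    refine (ae_restrict_iff' measurableSet_Ioc).2 (Filter.Eventually.of_forall ?_)
    intro τ hτ
    simpa [Real.norm_eq_abs] using hgb τ ⟨hτ.1.le, hτ.2.trans ht.2.le⟩
  have hD : HasDerivAt (fun u => ∫ τ in (0:ℝ)..u, g τ) (g t) t :=
    intervalIntegral.integral_hasDerivAt_right hII
      (ContinuousOn.stronglyMeasurableAtFilter isOpen_Ioo hgCO t ht)
      (hgCA t ht)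
  have hEq : (fun τ => ∫ s in (0:ℝ)..τ, lam s * (τ - s) ^ (H + 1/2))
      =ᶠ[nhds t] (fun u => ∫ τ in (0:ℝ)..u, g τ) := by
    filter_upwards [isOpen_Ioo.mem_nhds ht] with r hr
    exact (hkey r ⟨hr.1.le, hr.2.le⟩).symm
  have := hD.congr_of_eventuallyEq hEq
  rwa [hg_eq t] at this
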